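/- Let (b,c,d) be a triad in the real Cayley–Dickson algebra 𝔸ₙ (all εᵢ = 1) satisfying the Moufang identity (d·b)·(c·d) = (d·(b·c))·d. If moreover ((b·c)·d)·b + (b·c)·(d·b) = 0 (Mal'cev's simplified identity for the triad), then [b,c,d] ≠ 0; if instead ((b·c)·d)·b − (b·c)·(d·b) = 0, then [b,c,d] = 0. -/

import Mathlib

noncomputable section

/-- The real Cayley–Dickson algebra carrier: `CD 0 = ℝ`, `CD (n+1) = CD n × CD n`. -/
def CD : ℕ → Type
  | 0 => ℝ
  | n + 1 => CD n × CD n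

instance CD.instAddCommGroup : (n : ℕ) → AddCommGroup (CD n)
  | 0 => inferInstanceAs (AddCommGroup ℝ)
  | n + 1 =>
    letI := CD.instAddCommGroup n
    inferInstanceAs (AddCommGroup (CD n × CD n))

instance CD.instModule : (n : ℕ) → Module ℝ (CD n)
  | 0 => inferInstanceAs (Module ℝ ℝ)
  | n + 1 =>
    letI := CD.instModule n
    inferInstanceAs (Module ℝ (CD n × CD n))

/-- The unit of the Cayley–Dickson algebra. -/
def CD.one : (n : ℕ) → CD n
  | 0 => (1 : ℝ)
  | n + 1 => (CD.one n, 0)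

/-- Conjugation: `(a, b)* = (a*, -b)`, identity on `ℝ`. -/
def CD.conj : (n : ℕ) → CD n → CD n
  | 0, a => a
  | n + 1, x => (CD.conj n x.1, -x.2)

/-- Cayley–Dickson multiplication with sign vector `ε`:
`(a,b)·(c,d) = (a·c − ε (n+1) • (d*·b), d·a + b·c*)`. -/
def CD.mul (ε : ℕ → ℝ) : (n : ℕ) → CD n → CD n → CD n
  | 0, a, c => (show ℝ from a) * (show ℝ from c)
  | n + 1, x, y =>
    (CD.mul ε n x.1 y.1 - ε (n + 1) • CD.mul ε n (CD.conj n y.2) x.2,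
     CD.mul ε n y.2 x.1 + CD.mul ε n x.2 (CD.conj n y.1))

/-- The standard basis element `e α` of `CD n`, for `α ⊆ {1,…,n}`. -/
def CD.basis : (n : ℕ) → Finset ℕ → CD n
  | 0, _ => (1 : ℝ)
  | n + 1, α =>
    if n + 1 ∈ α then ((0 : CD n), CD.basis n (α.erase (n + 1)))
    else (CD.basis n α, (0 : CD n))

/-- `α` indexes a pure basis element of `CD n`. -/
def CD.IsPure (n : ℕ) (α : Finset ℕ) : Prop :=
  α.Nonempty ∧ α ⊆ Finset.Icc 1 n

/-- The associator `[x,y,z] = (x·y)·z − x·(y·z)`. -/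
def CD.assoc (ε : ℕ → ℝ) (n : ℕ) (x y z : CD n) : CD n :=
  CD.mul ε n (CD.mul ε n x y) z - CD.mul ε n x (CD.mul ε n y z)

/-- A triad: indices of three pairwise distinct pure basis elements `b, c, d`
with `d ≠ ±(b·c)` (all signs `εᵢ = 1`). -/
def CD.IsTriad (n : ℕ) (α β γ : Finset ℕ) : Prop :=
  CD.IsPure n α ∧ CD.IsPure n β ∧ CD.IsPure n γ ∧
  α ≠ β ∧ α ≠ γ ∧ β ≠ γ ∧
  CD.basis n γ ≠ CD.mul (fun _ => 1) n (CD.basis n α) (CD.basis n β) ∧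
  CD.basis n γ ≠ -CD.mul (fun _ => 1) n (CD.basis n α) (CD.basis n β)

/-- Multiplication with all signs `εᵢ = 1`. -/
abbrev CD.mul1 (n : ℕ) : CD n → CD n → CD n := CD.mul (fun _ => 1) n

/-- Associator with all signs `εᵢ = 1`. -/
abbrev CD.assoc1 (n : ℕ) : CD n → CD n → CD n → CD n := CD.assoc (fun _ => 1) n

namespace CD

variable {ε : ℕ → ℝ}

theorem pair_eq {n : ℕ} {x y : CD (n+1)} (h1 : x.1 = y.1) (h2 : x.2 = y.2) : x = y :=
  Prod.ext h1 h2

theorem mul_fst (n : ℕ) (x y : CD (n+1)) :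
    (CD.mul ε (n+1) x y).1
      = CD.mul ε n x.1 y.1 - ε (n + 1) • CD.mul ε n (CD.conj n y.2) x.2 := rfl
theorem mul_snd (n : ℕ) (x y : CD (n+1)) :
    (CD.mul ε (n+1) x y).2 = CD.mul ε n y.2 x.1 + CD.mul ε n x.2 (CD.conj n y.1) := rfl
theorem conj_fst (n : ℕ) (x : CD (n+1)) : (CD.conj (n+1) x).1 = CD.conj n x.1 := rfl
theorem conj_snd (n : ℕ) (x : CD (n+1)) : (CD.conj (n+1) x).2 = -x.2 := rfl
theorem neg_fst (n : ℕ) (x : CD (n+1)) : (-x).1 = -x.1 := rfl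
theorem neg_snd (n : ℕ) (x : CD (n+1)) : (-x).2 = -x.2 := rfl
theorem add_fst (n : ℕ) (x y : CD (n+1)) : (x + y).1 = x.1 + y.1 := rfl
theorem add_snd (n : ℕ) (x y : CD (n+1)) : (x + y).2 = x.2 + y.2 := rfl
theorem sub_fst (n : ℕ) (x y : CD (n+1)) : (x - y).1 = x.1 - y.1 := rfl
theorem sub_snd (n : ℕ) (x y : CD (n+1)) : (x - y).2 = x.2 - y.2 := rfl
theorem zero_fst (n : ℕ) : ((0 : CD (n+1))).1 = 0 := rfl
theorem zero_snd (n : ℕ) : ((0 : CD (n+1))).2 = 0 := rfl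
theorem smul_fst (n : ℕ) (r : ℝ) (x : CD (n+1)) : (r • x).1 = r • x.1 := rfl
theorem smul_snd (n : ℕ) (r : ℝ) (x : CD (n+1)) : (r • x).2 = r • x.2 := rfl

theorem conj_zero : ∀ n, CD.conj n (0 : CD n) = 0
  | 0 => rfl
  | n + 1 => by
    apply pair_eq <;> simp [conj_fst, conj_snd, zero_fst, zero_snd, conj_zero n]

theorem conj_neg : ∀ n (x : CD n), CD.conj n (-x) = -CD.conj n x
  | 0, x => rfl
  | n + 1, x => by
    apply pair_eq <;> simp [conj_fst, conj_snd, neg_fst, neg_snd, conj_neg n]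

theorem conj_sub : ∀ n (x y : CD n), CD.conj n (x - y) = CD.conj n x - CD.conj n y
  | 0, x, y => rfl
  | n + 1, x, y => by
    apply pair_eq <;>
      simp [conj_fst, conj_snd, sub_fst, sub_snd, neg_fst, neg_snd, conj_sub n, neg_sub']
    abel

theorem conj_conj : ∀ n (x : CD n), CD.conj n (CD.conj n x) = x
  | 0, x => rfl
  | n + 1, x => by
    apply pair_eq <;> simp [conj_fst, conj_snd, conj_conj n]

theorem conj_smul : ∀ n (r : ℝ) (x : CD n), CD.conj n (r • x) = r • CD.conj n x
  | 0, r, x => rfl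
  | n + 1, r, x => by
    apply pair_eq <;> simp [conj_fst, conj_snd, smul_fst, smul_snd, conj_smul n]

theorem zero_mul_and_mul_zero : ∀ n (x : CD n), CD.mul ε n 0 x = 0 ∧ CD.mul ε n x 0 = 0
  | 0, x => by
    constructor <;> [skip; skip] <;> [show (0:ℝ) * _ = 0; show _ * (0:ℝ) = 0] <;> ring
  | n + 1, x => by
    have h1 := fun y => (zero_mul_and_mul_zero n y).1
    have h2 := fun y => (zero_mul_and_mul_zero n y).2
    constructor <;> apply pair_eq <;>
      simp [mul_fst, mul_snd, zero_fst, zero_snd, conj_zero, h1, h2]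

theorem zero_mul (n : ℕ) (x : CD n) : CD.mul ε n 0 x = 0 := (zero_mul_and_mul_zero n x).1
theorem mul_zero' (n : ℕ) (x : CD n) : CD.mul ε n x 0 = 0 := (zero_mul_and_mul_zero n x).2

theorem neg_mul_and_mul_neg : ∀ n (x y : CD n),
    CD.mul ε n (-x) y = -CD.mul ε n x y ∧ CD.mul ε n x (-y) = -CD.mul ε n x y
  | 0, x, y => by
    constructor <;> [show (-(show ℝ from x)) * _ = -(_*_); show _ * (-(show ℝ from y)) = -(_*_)]
      <;> ring
  | n + 1, x, y => by
    have h1 := fun z w => (neg_mul_and_mul_neg n z w).1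
    have h2 := fun z w => (neg_mul_and_mul_neg n z w).2
    constructor <;> apply pair_eq <;>
      simp [mul_fst, mul_snd, neg_fst, neg_snd, conj_neg, h1, h2, neg_sub', neg_add] <;> abel

theorem neg_mul (n : ℕ) (x y : CD n) : CD.mul ε n (-x) y = -CD.mul ε n x y :=
  (neg_mul_and_mul_neg n x y).1
theorem mul_neg (n : ℕ) (x y : CD n) : CD.mul ε n x (-y) = -CD.mul ε n x y :=
  (neg_mul_and_mul_neg n x y).2

theorem conj_mul : ∀ n (x y : CD n),
    CD.conj n (CD.mul ε n x y) = CD.mul ε n (CD.conj n y) (CD.conj n x)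
  | 0, x, y => by
    show (show ℝ from x) * (show ℝ from y) = (show ℝ from y) * (show ℝ from x)
    ring
  | n + 1, x, y => by
    apply pair_eq <;>
      simp [mul_fst, mul_snd, conj_fst, conj_snd, conj_sub, conj_smul, conj_mul n,
        conj_conj, conj_neg, neg_mul, mul_neg, neg_add] <;> abel

end CD
namespace CD

def mkp (n : ℕ) (a b : CD n) : CD (n+1) := (a, b)
@[simp] theorem mkp_fst (n : ℕ) (a b : CD n) : (mkp n a b).1 = a := rfl
@[simp] theorem mkp_snd (n : ℕ) (a b : CD n) : (mkp n a b).2 = b := rfl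

theorem basis_succ (n : ℕ) (S : Finset ℕ) :
    CD.basis (n+1) S = if n + 1 ∈ S then mkp n (0 : CD n) (CD.basis n (S.erase (n + 1)))
      else mkp n (CD.basis n S) (0 : CD n) := rfl

theorem basis_ne_zero : ∀ n (S : Finset ℕ), CD.basis n S ≠ 0
  | 0, S => (one_ne_zero : (1:ℝ) ≠ 0)
  | n + 1, S => by
    rw [basis_succ]
    split <;> intro h <;>
      [exact basis_ne_zero n (S.erase (n+1)) (congrArg Prod.snd h);
       exact basis_ne_zero n S (congrArg Prod.fst h)]

theorem add_self_eq_zero (n : ℕ) (x : CD n) (h : x + x = 0) : x = 0 := by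
  have h2 : (2:ℝ) • x = 0 := by rw [two_smul]; exact h
  calc x = ((2:ℝ)⁻¹ * 2) • x := by norm_num
  _ = (2:ℝ)⁻¹ • ((2:ℝ) • x) := mul_smul _ _ _
  _ = 0 := by rw [h2, smul_zero]

theorem subset_of_not_mem {n : ℕ} {S : Finset ℕ} (h : S ⊆ Finset.Icc 1 (n+1))
    (hn : n + 1 ∉ S) : S ⊆ Finset.Icc 1 n := by
  intro a ha
  have := h ha
  simp only [Finset.mem_Icc] at *
  refine ⟨this.1, ?_⟩
  rcases Nat.lt_or_ge a (n+1) with h' | h'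
  · omega
  · exfalso; apply hn; have : a = n + 1 := by omega
    rwa [this] at ha

theorem erase_subset_icc {n : ℕ} {S : Finset ℕ} (h : S ⊆ Finset.Icc 1 (n+1)) :
    S.erase (n+1) ⊆ Finset.Icc 1 n := by
  intro a ha
  rw [Finset.mem_erase] at ha
  have := h ha.2
  simp only [Finset.mem_Icc] at *
  omega

theorem conj_basis_nonempty : ∀ n (S : Finset ℕ), S.Nonempty → S ⊆ Finset.Icc 1 n →
    CD.conj n (CD.basis n S) = -CD.basis n S
  | 0, S, hne, hsub => by
    exact absurd (hsub hne.choose_spec) (by simp)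
  | n + 1, S, hne, hsub => by
    rw [basis_succ]
    by_cases hmem : n + 1 ∈ S
    · rw [if_pos hmem]
      exact pair_eq (by simp [conj_fst, neg_fst, conj_zero]) (by simp [conj_snd, neg_snd])
    · rw [if_neg hmem]
      exact pair_eq
        (by simp [conj_fst, neg_fst, conj_basis_nonempty n S hne (subset_of_not_mem hsub hmem)])
        (by simp [conj_snd, neg_snd])

end CD
namespace CD

theorem basis_inv : ∀ n (S : Finset ℕ), S ⊆ Finset.Icc 1 n →
    (∀ y, CD.mul1 n (CD.conj n (CD.basis n S)) (CD.mul1 n (CD.basis n S) y) = y) ∧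
    (∀ y, CD.mul1 n (CD.basis n S) (CD.mul1 n (CD.conj n (CD.basis n S)) y) = y) ∧
    (∀ y, CD.mul1 n (CD.mul1 n y (CD.basis n S)) (CD.conj n (CD.basis n S)) = y) ∧
    (∀ y, CD.mul1 n (CD.mul1 n y (CD.conj n (CD.basis n S))) (CD.basis n S) = y)
  | 0, S, hsub => by
    refine ⟨fun y => ?_, fun y => ?_, fun y => ?_, fun y => ?_⟩
    · show (1:ℝ) * ((1:ℝ) * (show ℝ from y)) = (show ℝ from y); ring
    · show (1:ℝ) * ((1:ℝ) * (show ℝ from y)) = (show ℝ from y); ring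
    · show ((show ℝ from y) * (1:ℝ)) * (1:ℝ) = (show ℝ from y); ring
    · show ((show ℝ from y) * (1:ℝ)) * (1:ℝ) = (show ℝ from y); ring
  | n + 1, S, hsub => by
    by_cases hmem : n + 1 ∈ S
    · obtain ⟨ih1, ih2, ih3, ih4⟩ := basis_inv n (S.erase (n+1)) (erase_subset_icc hsub)
      rw [basis_succ, if_pos hmem]
      refine ⟨fun y => ?_, fun y => ?_, fun y => ?_, fun y => ?_⟩ <;>
        apply pair_eq <;>
          simp [mul_fst, mul_snd, conj_fst, conj_snd, zero_mul, mul_zero', conj_zero,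
            conj_mul, conj_conj, conj_neg, neg_mul, mul_neg, ih1, ih2, ih3, ih4]
    · obtain ⟨ih1, ih2, ih3, ih4⟩ := basis_inv n S (subset_of_not_mem hsub hmem)
      rw [basis_succ, if_neg hmem]
      refine ⟨fun y => ?_, fun y => ?_, fun y => ?_, fun y => ?_⟩ <;>
        apply pair_eq <;>
          simp [mul_fst, mul_snd, conj_fst, conj_snd, zero_mul, mul_zero', conj_zero,
            conj_mul, conj_conj, conj_neg, neg_mul, mul_neg, ih1, ih2, ih3, ih4]

end CD
namespace CD

def Pm (n : ℕ) (S : Finset ℕ) (x : CD n) : Prop :=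
  x = CD.basis n S ∨ x = -CD.basis n S

theorem conj_basis_pm : ∀ n (S : Finset ℕ), Pm n S (CD.conj n (CD.basis n S))
  | 0, S => Or.inl rfl
  | n + 1, S => by
    rw [basis_succ]
    by_cases hmem : n + 1 ∈ S
    · rw [if_pos hmem]
      right
      exact pair_eq (by simp [conj_fst, neg_fst, conj_zero, basis_succ, if_pos hmem])
        (by simp [conj_snd, neg_snd, basis_succ, if_pos hmem])
    · rcases conj_basis_pm n S with h | h
      · left
        rw [if_neg hmem]
        exact pair_eq (by simp [conj_fst, basis_succ, if_neg hmem, h])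
          (by simp [conj_snd, basis_succ, if_neg hmem])
      · right
        rw [if_neg hmem]
        exact pair_eq (by simp [conj_fst, neg_fst, basis_succ, if_neg hmem, h])
          (by simp [conj_snd, neg_snd, basis_succ, if_neg hmem])

theorem erase_symmDiff_left {n : ℕ} {S T : Finset ℕ} (hS : n + 1 ∈ S) (hT : n + 1 ∉ T) :
    (symmDiff S T).erase (n+1) = symmDiff (S.erase (n+1)) T := by
  ext a
  simp only [Finset.mem_erase, Finset.mem_symmDiff]
  by_cases ha : a = n + 1 <;> subst_eqs <;> tauto

theorem erase_symmDiff_right {n : ℕ} {S T : Finset ℕ} (hS : n + 1 ∉ S) (hT : n + 1 ∈ T) :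
    (symmDiff S T).erase (n+1) = symmDiff S (T.erase (n+1)) := by
  ext a
  simp only [Finset.mem_erase, Finset.mem_symmDiff]
  by_cases ha : a = n + 1 <;> subst_eqs <;> tauto

theorem symmDiff_erase_both {n : ℕ} {S T : Finset ℕ} (hS : n + 1 ∈ S) (hT : n + 1 ∈ T) :
    symmDiff S T = symmDiff (S.erase (n+1)) (T.erase (n+1)) := by
  ext a
  simp only [Finset.mem_erase, Finset.mem_symmDiff]
  by_cases ha : a = n + 1 <;> subst_eqs <;> tauto

theorem mem_symmDiff_iff {S T : Finset ℕ} {a : ℕ} :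
    a ∈ symmDiff S T ↔ (a ∈ S ∧ a ∉ T) ∨ (a ∈ T ∧ a ∉ S) := Finset.mem_symmDiff

theorem basis_mul_basis : ∀ n (S T : Finset ℕ), S ⊆ Finset.Icc 1 n → T ⊆ Finset.Icc 1 n →
    Pm n (symmDiff S T) (CD.mul1 n (CD.basis n S) (CD.basis n T))
  | 0, S, T, hS, hT => by
    left
    show (1:ℝ) * (1:ℝ) = 1
    ring
  | n + 1, S, T, hS, hT => by
    unfold Pm
    by_cases hmS : n + 1 ∈ S <;> by_cases hmT : n + 1 ∈ T
    · -- both contain n+1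
      have ih := basis_mul_basis n (T.erase (n+1)) (S.erase (n+1))
        (erase_subset_icc hT) (erase_subset_icc hS)
      have hc := conj_basis_pm n (T.erase (n+1))
      have hm : n + 1 ∉ symmDiff S T := by simp [mem_symmDiff_iff, hmS, hmT]
      rw [basis_succ n S, if_pos hmS, basis_succ n T, if_pos hmT, basis_succ n _, if_neg hm,
        symmDiff_erase_both hmS hmT, ← symmDiff_comm]
      rcases ih with h | h <;> rcases hc with h2 | h2
      · right
        refine pair_eq ?_ (by simp [mul_snd, conj_zero, zero_mul, mul_zero', neg_snd])
        simp [mul_fst, zero_mul, h2, h, neg_fst]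
      · left
        refine pair_eq ?_ (by simp [mul_snd, conj_zero, zero_mul, mul_zero'])
        simp [mul_fst, zero_mul, h2, neg_mul, h]
      · left
        refine pair_eq ?_ (by simp [mul_snd, conj_zero, zero_mul, mul_zero'])
        simp [mul_fst, zero_mul, h2, h]
      · right
        refine pair_eq ?_ (by simp [mul_snd, conj_zero, zero_mul, mul_zero', neg_snd])
        simp [mul_fst, zero_mul, h2, neg_mul, h, neg_fst]
    · -- n+1 ∈ S only
      have ih := basis_mul_basis n (S.erase (n+1)) T
        (erase_subset_icc hS) (subset_of_not_mem hT hmT)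
      have hc := conj_basis_pm n T
      have hm : n + 1 ∈ symmDiff S T := by simp [mem_symmDiff_iff, hmS, hmT]
      rw [basis_succ n S, if_pos hmS, basis_succ n T, if_neg hmT, basis_succ n _, if_pos hm,
        erase_symmDiff_left hmS hmT]
      rcases ih with h | h <;> rcases hc with h2 | h2
      · left
        refine pair_eq (by simp [mul_fst, zero_mul, mul_zero', conj_zero]) ?_
        simp [mul_snd, zero_mul, h2, h]
      · right
        refine pair_eq (by simp [mul_fst, zero_mul, mul_zero', conj_zero, neg_fst]) ?_
        simp [mul_snd, zero_mul, h2, mul_neg, h, neg_snd]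
      · right
        refine pair_eq (by simp [mul_fst, zero_mul, mul_zero', conj_zero, neg_fst]) ?_
        simp [mul_snd, zero_mul, h2, h, neg_snd]
      · left
        refine pair_eq (by simp [mul_fst, zero_mul, mul_zero', conj_zero]) ?_
        simp [mul_snd, zero_mul, h2, mul_neg, h]
    · -- n+1 ∈ T only
      have ih := basis_mul_basis n (T.erase (n+1)) S
        (erase_subset_icc hT) (subset_of_not_mem hS hmS)
      have hm : n + 1 ∈ symmDiff S T := by simp [mem_symmDiff_iff, hmS, hmT]
      rw [basis_succ n S, if_neg hmS, basis_succ n T, if_pos hmT, basis_succ n _, if_pos hm,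
        erase_symmDiff_right hmS hmT, symmDiff_comm]
      rcases ih with h | h
      · left
        refine pair_eq (by simp [mul_fst, zero_mul, mul_zero', conj_zero]) ?_
        simp [mul_snd, zero_mul, mul_zero', conj_zero, h]
      · right
        refine pair_eq (by simp [mul_fst, zero_mul, mul_zero', conj_zero, neg_fst]) ?_
        simp [mul_snd, zero_mul, mul_zero', conj_zero, h, neg_snd]
    · -- neither
      have ih := basis_mul_basis n S T (subset_of_not_mem hS hmS) (subset_of_not_mem hT hmT)
      have hm : n + 1 ∉ symmDiff S T := by simp [mem_symmDiff_iff, hmS, hmT]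
      rw [basis_succ n S, if_neg hmS, basis_succ n T, if_neg hmT, basis_succ n _, if_neg hm]
      rcases ih with h | h
      · left
        refine pair_eq ?_ (by simp [mul_snd, zero_mul, mul_zero', conj_zero])
        simp [mul_fst, zero_mul, mul_zero', conj_zero, h]
      · right
        refine pair_eq ?_ (by simp [mul_snd, zero_mul, mul_zero', conj_zero, neg_snd])
        simp [mul_fst, zero_mul, mul_zero', conj_zero, h, neg_fst]

end CD
namespace CD

theorem m1_neg_mul (n : ℕ) (x y : CD n) : CD.mul1 n (-x) y = -CD.mul1 n x y := neg_mul n x y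
theorem m1_mul_neg (n : ℕ) (x y : CD n) : CD.mul1 n x (-y) = -CD.mul1 n x y := mul_neg n x y

theorem sd_nonempty {S T : Finset ℕ} (h : S ≠ T) : (symmDiff S T).Nonempty := by
  rw [Finset.nonempty_iff_ne_empty]
  intro he
  apply h
  ext a
  have := Finset.ext_iff.mp he a
  simp only [mem_symmDiff_iff, Finset.notMem_empty, iff_false] at this
  tauto

theorem sd_subset {S T U : Finset ℕ} (hS : S ⊆ U) (hT : T ⊆ U) : symmDiff S T ⊆ U := by
  intro a ha
  rcases mem_symmDiff_iff.mp ha with h | h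
  · exact hS h.1
  · exact hT h.1

theorem pm_ne_zero {n : ℕ} {S : Finset ℕ} {x : CD n} (h : Pm n S x) : x ≠ 0 := by
  rcases h with rfl | rfl
  · exact basis_ne_zero n S
  · simpa [neg_eq_zero] using basis_ne_zero n S

theorem pm_neg {n : ℕ} {S : Finset ℕ} {x : CD n} (h : Pm n S x) : Pm n S (-x) := by
  rcases h with rfl | rfl
  · exact Or.inr rfl
  · exact Or.inl (neg_neg _)

theorem pm_mul {n : ℕ} {S T : Finset ℕ} {x y : CD n}
    (hS : S ⊆ Finset.Icc 1 n) (hT : T ⊆ Finset.Icc 1 n)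
    (hx : Pm n S x) (hy : Pm n T y) : Pm n (symmDiff S T) (CD.mul1 n x y) := by
  have hb := basis_mul_basis n S T hS hT
  rcases hx with rfl | rfl <;> rcases hy with rfl | rfl
  · exact hb
  · rw [m1_mul_neg]; exact pm_neg hb
  · rw [m1_neg_mul]; exact pm_neg hb
  · rw [m1_neg_mul, m1_mul_neg, neg_neg]; exact hb

theorem pm_invL {n : ℕ} {S : Finset ℕ} {x : CD n} (hne : S.Nonempty)
    (hsub : S ⊆ Finset.Icc 1 n) (hx : Pm n S x) (y : CD n) :
    CD.mul1 n x (CD.mul1 n x y) = -y := by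
  have h1 := (basis_inv n S hsub).1 y
  rw [conj_basis_nonempty n S hne hsub, m1_neg_mul] at h1
  have key : CD.mul1 n (CD.basis n S) (CD.mul1 n (CD.basis n S) y) = -y :=
    neg_eq_iff_eq_neg.mp h1
  rcases hx with rfl | rfl
  · exact key
  · rw [m1_neg_mul, m1_neg_mul, m1_mul_neg, neg_neg]; exact key

theorem pm_invR {n : ℕ} {S : Finset ℕ} {x : CD n} (hne : S.Nonempty)
    (hsub : S ⊆ Finset.Icc 1 n) (hx : Pm n S x) (y : CD n) :
    CD.mul1 n (CD.mul1 n y x) x = -y := by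
  have h1 := (basis_inv n S hsub).2.2.1 y
  rw [conj_basis_nonempty n S hne hsub, m1_mul_neg] at h1
  have key : CD.mul1 n (CD.mul1 n y (CD.basis n S)) (CD.basis n S) = -y :=
    neg_eq_iff_eq_neg.mp h1
  rcases hx with rfl | rfl
  · exact key
  · rw [m1_mul_neg, m1_mul_neg, m1_neg_mul, neg_neg]; exact key

theorem pm_anticomm {n : ℕ} {S T : Finset ℕ} {x y : CD n}
    (hSs : S ⊆ Finset.Icc 1 n) (hTs : T ⊆ Finset.Icc 1 n)
    (hSne : S.Nonempty) (hTne : T.Nonempty) (hST : S ≠ T)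
    (hx : Pm n S x) (hy : Pm n T y) :
    CD.mul1 n x y = -CD.mul1 n y x := by
  suffices h : CD.mul1 n (CD.basis n S) (CD.basis n T)
      = -CD.mul1 n (CD.basis n T) (CD.basis n S) by
    rcases hx with rfl | rfl <;> rcases hy with rfl | rfl <;>
      simp [m1_neg_mul, m1_mul_neg, h]
  have hz := basis_mul_basis n S T hSs hTs
  have hzne : (symmDiff S T).Nonempty := sd_nonempty hST
  have hzsub : symmDiff S T ⊆ Finset.Icc 1 n := sd_subset hSs hTs
  have hc1 : CD.conj n (CD.mul1 n (CD.basis n S) (CD.basis n T))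
      = -CD.mul1 n (CD.basis n S) (CD.basis n T) := by
    rcases hz with h | h <;> rw [h] <;>
      simp [conj_neg, conj_basis_nonempty n _ hzne hzsub]
  rw [conj_mul, conj_basis_nonempty n S hSne hSs, conj_basis_nonempty n T hTne hTs] at hc1
  have hc1' : CD.mul1 n (-CD.basis n T) (-CD.basis n S)
      = -CD.mul1 n (CD.basis n S) (CD.basis n T) := hc1
  rw [m1_neg_mul, m1_mul_neg, neg_neg] at hc1'
  rw [hc1', neg_neg]

end CD

/-- For a triad `(b,c,d)` satisfying the third Moufang identity
`(d·b)·(c·d) = (d·(b·c))·d`: if `((b·c)·d)·b + (b·c)·(d·b) = 0` then `[b,c,d] ≠ 0`;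
if `((b·c)·d)·b − (b·c)·(d·b) = 0` then `[b,c,d] = 0`. -/
theorem stmt10 (n : ℕ) (α β γ : Finset ℕ) (h : CD.IsTriad n α β γ)
    (b c d : CD n) (hb : b = CD.basis n α) (hc : c = CD.basis n β)
    (hd : d = CD.basis n γ)
    (hmouf : CD.mul1 n (CD.mul1 n d b) (CD.mul1 n c d)
      = CD.mul1 n (CD.mul1 n d (CD.mul1 n b c)) d) :
    (CD.mul1 n (CD.mul1 n (CD.mul1 n b c) d) b
        + CD.mul1 n (CD.mul1 n b c) (CD.mul1 n d b) = 0 →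
      CD.assoc1 n b c d ≠ 0) ∧
    (CD.mul1 n (CD.mul1 n (CD.mul1 n b c) d) b
        - CD.mul1 n (CD.mul1 n b c) (CD.mul1 n d b) = 0 →
      CD.assoc1 n b c d = 0) := by
  obtain ⟨⟨hαne, hαs⟩, ⟨hβne, hβs⟩, ⟨hγne, hγs⟩, hαβ, hαγ, hβγ, hd1, hd2⟩ := h
  subst hb; subst hc; subst hd
  -- abbreviations
  have hbc : CD.Pm n (symmDiff α β) (CD.mul1 n (CD.basis n α) (CD.basis n β)) :=
    CD.basis_mul_basis n α β hαs hβs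
  have hcd : CD.Pm n (symmDiff β γ) (CD.mul1 n (CD.basis n β) (CD.basis n γ)) :=
    CD.basis_mul_basis n β γ hβs hγs
  have hdb : CD.Pm n (symmDiff γ α) (CD.mul1 n (CD.basis n γ) (CD.basis n α)) :=
    CD.basis_mul_basis n γ α hγs hαs
  have hUαβ : symmDiff α β ⊆ Finset.Icc 1 n := CD.sd_subset hαs hβs
  have hUβγ : symmDiff β γ ⊆ Finset.Icc 1 n := CD.sd_subset hβs hγs
  have hUγα : symmDiff γ α ⊆ Finset.Icc 1 n := CD.sd_subset hγs hαs
  have hNαβ : (symmDiff α β).Nonempty := CD.sd_nonempty hαβ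
  have hNβγ : (symmDiff β γ).Nonempty := CD.sd_nonempty hβγ
  have hNγα : (symmDiff γ α).Nonempty := CD.sd_nonempty (Ne.symm hαγ)
  -- γ ≠ α ∆ β
  have hγαβ : γ ≠ symmDiff α β := by
    intro hEq
    rcases hbc with hh | hh
    · exact hd1 (by rw [hEq]; exact hh.symm)
    · apply hd2
      have hh' : CD.mul (fun _ => (1:ℝ)) n (CD.basis n α) (CD.basis n β)
          = -CD.basis n (symmDiff α β) := hh
      rw [hh', hEq, neg_neg]
  -- set inequalities
  have hq2 : symmDiff α β ≠ symmDiff γ α := by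
    intro hEq
    apply hβγ
    ext a
    have := Finset.ext_iff.mp hEq a
    simp only [CD.mem_symmDiff_iff] at this
    tauto
  have hq3 : α ≠ symmDiff β γ := by
    intro hEq
    apply hγαβ
    ext a
    have := Finset.ext_iff.mp hEq a
    simp only [CD.mem_symmDiff_iff] at this
    simp only [CD.mem_symmDiff_iff]
    tauto
  -- Step A: Moufang gives (db)(cd) = bc
  have h1 : CD.mul1 n (CD.basis n γ) (CD.mul1 n (CD.basis n α) (CD.basis n β))
      = -CD.mul1 n (CD.mul1 n (CD.basis n α) (CD.basis n β)) (CD.basis n γ) :=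
    CD.pm_anticomm hγs hUαβ hγne hNαβ (Ne.symm hγαβ).symm (Or.inl rfl) hbc
  have h2 : ∀ y, CD.mul1 n (CD.mul1 n y (CD.basis n γ)) (CD.basis n γ) = -y :=
    CD.pm_invR hγne hγs (Or.inl rfl)
  have hstar : CD.mul1 n (CD.mul1 n (CD.basis n γ) (CD.basis n α))
      (CD.mul1 n (CD.basis n β) (CD.basis n γ))
      = CD.mul1 n (CD.basis n α) (CD.basis n β) := by
    rw [hmouf, h1, CD.m1_neg_mul, h2, neg_neg]
  -- Step B: (db)(bc) = -(cd)
  have hinvx := CD.pm_invL hNγα hUγα hdb (CD.mul1 n (CD.basis n β) (CD.basis n γ))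
  rw [hstar] at hinvx
  -- Step C: KEY1 : (bc)(db) = cd
  have h3 : CD.mul1 n (CD.mul1 n (CD.basis n α) (CD.basis n β))
        (CD.mul1 n (CD.basis n γ) (CD.basis n α))
      = -CD.mul1 n (CD.mul1 n (CD.basis n γ) (CD.basis n α))
        (CD.mul1 n (CD.basis n α) (CD.basis n β)) :=
    CD.pm_anticomm hUαβ hUγα hNαβ hNγα hq2 hbc hdb
  have KEY1 : CD.mul1 n (CD.mul1 n (CD.basis n α) (CD.basis n β))
        (CD.mul1 n (CD.basis n γ) (CD.basis n α))
      = CD.mul1 n (CD.basis n β) (CD.basis n γ) := by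
    rw [h3, hinvx, neg_neg]
  -- Step D: (b(cd))b = cd
  have h4 : CD.mul1 n (CD.basis n α) (CD.mul1 n (CD.basis n β) (CD.basis n γ))
      = -CD.mul1 n (CD.mul1 n (CD.basis n β) (CD.basis n γ)) (CD.basis n α) :=
    CD.pm_anticomm hαs hUβγ hαne hNβγ hq3 (Or.inl rfl) hcd
  have h5 : ∀ y, CD.mul1 n (CD.mul1 n y (CD.basis n α)) (CD.basis n α) = -y :=
    CD.pm_invR hαne hαs (Or.inl rfl)
  have hu2b : CD.mul1 n (CD.mul1 n (CD.basis n α)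
        (CD.mul1 n (CD.basis n β) (CD.basis n γ))) (CD.basis n α)
      = CD.mul1 n (CD.basis n β) (CD.basis n γ) := by
    rw [h4, CD.m1_neg_mul, h5, neg_neg]
  -- Step E: Pm for both associations
  have hu1 : CD.Pm n (symmDiff (symmDiff α β) γ)
      (CD.mul1 n (CD.mul1 n (CD.basis n α) (CD.basis n β)) (CD.basis n γ)) :=
    CD.pm_mul hUαβ hγs hbc (Or.inl rfl)
  have hu2 : CD.Pm n (symmDiff α (symmDiff β γ))
      (CD.mul1 n (CD.basis n α) (CD.mul1 n (CD.basis n β) (CD.basis n γ))) :=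
    CD.pm_mul hαs hUβγ (Or.inl rfl) hcd
  rw [symmDiff_assoc] at hu1
  have hzne : CD.mul1 n (CD.basis n β) (CD.basis n γ) ≠ 0 := CD.pm_ne_zero hcd
  have hEne : CD.basis n (symmDiff α (symmDiff β γ)) ≠ 0 := CD.basis_ne_zero n _
  rcases hu1 with h6 | h6 <;> rcases hu2 with h7 | h7
  · -- u1 = E, u2 = E : associative case
    constructor
    · intro hplus
      exfalso
      rw [KEY1, h6, ← h7, hu2b] at hplus
      exact hzne (CD.add_self_eq_zero n _ hplus)
    · intro _
      show CD.mul1 n (CD.mul1 n (CD.basis n α) (CD.basis n β)) (CD.basis n γ)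
          - CD.mul1 n (CD.basis n α) (CD.mul1 n (CD.basis n β) (CD.basis n γ)) = 0
      rw [h6, h7, sub_self]
  · -- u1 = E, u2 = -E : nonassociative case
    constructor
    · intro _
      intro hass
      have hass' : CD.mul1 n (CD.mul1 n (CD.basis n α) (CD.basis n β)) (CD.basis n γ)
          - CD.mul1 n (CD.basis n α) (CD.mul1 n (CD.basis n β) (CD.basis n γ)) = 0 := hass
      rw [h6, h7, sub_neg_eq_add] at hass'
      exact hEne (CD.add_self_eq_zero n _ hass')
    · intro hminus
      exfalso
      have hu1b : CD.mul1 n (CD.mul1 n (CD.mul1 n (CD.basis n α) (CD.basis n β))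
            (CD.basis n γ)) (CD.basis n α)
          = -CD.mul1 n (CD.basis n β) (CD.basis n γ) := by
        rw [h6, show CD.basis n (symmDiff α (symmDiff β γ))
            = -(CD.mul1 n (CD.basis n α) (CD.mul1 n (CD.basis n β) (CD.basis n γ)))
          from by rw [h7, neg_neg], CD.m1_neg_mul, hu2b]
      rw [KEY1, hu1b, sub_eq_add_neg, ← neg_add, neg_eq_zero] at hminus
      exact hzne (CD.add_self_eq_zero n _ hminus)
  · -- u1 = -E, u2 = E : nonassociative case
    constructor
    · intro _
      intro hass
      have hass' : CD.mul1 n (CD.mul1 n (CD.basis n α) (CD.basis n β)) (CD.basis n γ)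
          - CD.mul1 n (CD.basis n α) (CD.mul1 n (CD.basis n β) (CD.basis n γ)) = 0 := hass
      rw [h6, h7, sub_eq_add_neg, ← neg_add, neg_eq_zero] at hass'
      exact hEne (CD.add_self_eq_zero n _ hass')
    · intro hminus
      exfalso
      have hu1b : CD.mul1 n (CD.mul1 n (CD.mul1 n (CD.basis n α) (CD.basis n β))
            (CD.basis n γ)) (CD.basis n α)
          = -CD.mul1 n (CD.basis n β) (CD.basis n γ) := by
        rw [h6, ← h7, CD.m1_neg_mul, hu2b]
      rw [KEY1, hu1b, sub_eq_add_neg, ← neg_add, neg_eq_zero] at hminus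
      exact hzne (CD.add_self_eq_zero n _ hminus)
  · -- u1 = -E, u2 = -E : associative case
    constructor
    · intro hplus
      exfalso
      rw [KEY1, h6, ← h7, hu2b] at hplus
      exact hzne (CD.add_self_eq_zero n _ hplus)
    · intro _
      show CD.mul1 n (CD.mul1 n (CD.basis n α) (CD.basis n β)) (CD.basis n γ)
          - CD.mul1 n (CD.basis n α) (CD.mul1 n (CD.basis n β) (CD.basis n γ)) = 0
      rw [h6, h7, sub_self]
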